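/- arXiv:1904.05174 — 2 statements merged into one kernel-verified Lean document; each statement's English description precedes it below -/
import Mathlib

section
/- Let p be an odd prime, and let V = (C_p × C_p) ⋊ C_2 be the generalized dihedral group of order 2p^2. The holomorph Hol(V) contains a subgroup F₁ that is isomorphic to ZMod p × ZMod (2p), acts regularly on V, and whose normalizer in Equiv.Perm V is contained in Hol(V). -/
/-- The holomorph of a group `X`: the normalizer in `Equiv.Perm X` of the image of the
left regular representation of `X`. -/
def Hol (X : Type*) [Group X] : Subgroup (Equiv.Perm X) :=
  Subgroup.normalizer ((MulAction.toPermHom X X).range : Set (Equiv.Perm X))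

/-- A subgroup `S` of `Equiv.Perm X` acts regularly on `X`: the action is transitive and
the stabilizer of every point is trivial. -/
def IsRegularSubgroup {X : Type*} (S : Subgroup (Equiv.Perm X)) : Prop :=
  (∀ x y : X, ∃ s ∈ S, s x = y) ∧ ∀ s ∈ S, ∀ x : X, s x = x → s = 1

/-- The inversion automorphism of `C_p × C_p` (written multiplicatively). -/
def invAut (p : ℕ) : MulAut (Multiplicative (ZMod p × ZMod p)) :=
  MulEquiv.inv (Multiplicative (ZMod p × ZMod p))

/-- The action of `C_2` on `C_p × C_p` by inversion. -/
def invHom (p : ℕ) : Multiplicative (ZMod 2) →* MulAut (Multiplicative (ZMod p × ZMod p)) where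
  toFun g := invAut p ^ (Multiplicative.toAdd g).val
  map_one' := by simp
  map_mul' g h := by
    have h2 : invAut p ^ 2 = 1 := by
      ext x : 1
      simp [invAut, sq]
    show invAut p ^ (Multiplicative.toAdd (g * h)).val = _
    rw [toAdd_mul, ZMod.val_add, ← pow_add]
    exact (pow_eq_pow_mod _ h2).symm

/-- The generalized dihedral group `(C_p × C_p) ⋊ C_2`: the semidirect product of
`C_p × C_p` (written multiplicatively) by the group of order 2 acting by inversion. -/
abbrev GenDihedral (p : ℕ) : Type :=
  SemidirectProduct (Multiplicative (ZMod p × ZMod p)) (Multiplicative (ZMod 2)) (invHom p)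

open Multiplicative

namespace AbRegHol

variable (p : ℕ)

/-- The abelian group `C_p × C_p × C_2`. -/
abbrev WW := Multiplicative ((ZMod p × ZMod p) × ZMod 2)

/-- The left regular representation of `GenDihedral p`. -/
abbrev lam : GenDihedral p →* Equiv.Perm (GenDihedral p) := MulAction.toPermHom _ _

lemma lam_apply (v x : GenDihedral p) : lam p v x = v * x := rfl

/-- Identification of the underlying set of `GenDihedral p` with `WW p`. -/
def eW : GenDihedral p ≃ WW p where
  toFun x := ofAdd (toAdd x.left, toAdd x.right)
  invFun w := ⟨ofAdd (toAdd w).1, ofAdd (toAdd w).2⟩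
  left_inv x := by ext <;> simp
  right_inv w := by simp

/-- The "translation" action of `WW p` on the set `GenDihedral p`. -/
def rho : WW p →* Equiv.Perm (GenDihedral p) where
  toFun w :=
    { toFun := fun x => ⟨x.left * ofAdd (toAdd w).1, x.right * ofAdd (toAdd w).2⟩
      invFun := fun x => ⟨x.left * (ofAdd (toAdd w).1)⁻¹, x.right * (ofAdd (toAdd w).2)⁻¹⟩
      left_inv := fun x => by ext <;> simp
      right_inv := fun x => by ext <;> simp }
  map_one' := by
    ext x <;> simp
  map_mul' w₁ w₂ := by
    ext x <;> simp [Equiv.Perm.mul_apply, mul_assoc, mul_comm]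

lemma rho_apply (w : WW p) (x : GenDihedral p) :
    rho p w x = ⟨x.left * ofAdd (toAdd w).1, x.right * ofAdd (toAdd w).2⟩ := rfl

lemma rho_one_apply (w : WW p) : rho p w 1 = (eW p).symm w := by
  simp [rho_apply, eW, SemidirectProduct.one_left, SemidirectProduct.one_right]

lemma rho_inj : Function.Injective (rho p) := by
  intro w₁ w₂ h
  have h1 := congrArg (fun (s : Equiv.Perm (GenDihedral p)) => s 1) h
  simp only [rho_one_apply] at h1
  exact (eW p).symm.injective h1

lemma le_normalizer_of_conj {G : Type*} [Group G] {H K : Subgroup G}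
    (h : ∀ k ∈ K, ∀ g ∈ H, k * g * k⁻¹ ∈ H) : K ≤ Subgroup.normalizer (H : Set G) := by
  intro k hk
  rw [Subgroup.mem_normalizer_iff]
  intro g
  constructor
  · exact fun hg => h k hk g hg
  · intro hg
    have := h k⁻¹ (inv_mem hk) _ hg
    simpa [mul_assoc] using this

lemma invHom_cases (r : Multiplicative (ZMod 2)) :
    invHom p r = 1 ∨ invHom p r = invAut p := by
  have h : toAdd r = 0 ∨ toAdd r = 1 := by
    rcases (show ∀ x : ZMod 2, x = 0 ∨ x = 1 by decide) (toAdd r) with h | h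
    · exact Or.inl h
    · exact Or.inr h
  show invAut p ^ (toAdd r).val = 1 ∨ invAut p ^ (toAdd r).val = invAut p
  rcases h with h | h
  · left; rw [h]; norm_num
  · right; rw [h, show ZMod.val (1 : ZMod 2) = 1 from rfl, pow_one]

lemma invAut_apply (n : Multiplicative (ZMod p × ZMod p)) : invAut p n = n⁻¹ := rfl

/-- conjugation of a left translation by `rho w` is a left translation. -/
lemma comm_aux {G : Type*} [CommGroup G] (a b c d : G) :
    a * b⁻¹ * c * (d * b) = a * d * c := by
  simp [mul_comm, mul_left_comm, mul_assoc]

lemma rho_conj_mem (w : WW p) (v : GenDihedral p) :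
    rho p w * lam p v * (rho p w)⁻¹ ∈ (lam p).range := by
  refine ⟨⟨v.left * ((invHom p v.right) (ofAdd (toAdd w).1))⁻¹ * ofAdd (toAdd w).1,
    v.right⟩, ?_⟩
  rw [eq_mul_inv_iff_mul_eq]
  ext x : 2
  · show ((lam p _) ((rho p w) x)).left = ((rho p w) ((lam p v) x)).left
    simp only [lam_apply, rho_apply, SemidirectProduct.mul_left, map_mul, map_inv]
    exact comm_aux _ _ _ _
  · show ((lam p _) ((rho p w) x)).right = ((rho p w) ((lam p v) x)).right
    simp only [lam_apply, rho_apply, SemidirectProduct.mul_right]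
    simp [mul_assoc]

/-- conjugation of a left translation by a "linear" permutation is a left translation. -/
lemma linear_conj (M : (ZMod p × ZMod p) →+ (ZMod p × ZMod p)) (π : Equiv.Perm (GenDihedral p))
    (hform : ∀ x : GenDihedral p, π x = ⟨ofAdd (M (toAdd x.left)), x.right⟩)
    (v : GenDihedral p) :
    π * lam p v * π⁻¹ = lam p ⟨ofAdd (M (toAdd v.left)), v.right⟩ := by
  rw [mul_inv_eq_iff_eq_mul]
  ext x : 2
  · show (π ((lam p v) x)).left = ((lam p _) (π x)).left
    rw [hform, hform]
    simp only [lam_apply, SemidirectProduct.mul_left]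
    rcases invHom_cases p v.right with h | h <;>
      simp [h, invAut_apply, toAdd_mul, map_add, ← ofAdd_add, ← ofAdd_neg]
  · show (π ((lam p v) x)).right = ((lam p _) (π x)).right
    rw [hform, hform]
    simp [lam_apply, SemidirectProduct.mul_right]

end AbRegHol

open AbRegHol

/-- The holomorph of the generalized dihedral group `V = (C_p × C_p) ⋊ C_2` of order
`2 p ^ 2` (`p` an odd prime) contains a subgroup isomorphic to `C_p × C_{2p}` acting
regularly on `V`, whose normalizer in `Equiv.Perm V` is contained in the holomorph. -/
theorem abelian_type_regular_in_hol_genDihedral (p : ℕ) (hp : p.Prime) (hodd : Odd p) :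
    ∃ F : Subgroup (Equiv.Perm (GenDihedral p)),
      F ≤ Hol (GenDihedral p) ∧
      Nonempty (↥F ≃* Multiplicative (ZMod p × ZMod (2 * p))) ∧
      IsRegularSubgroup F ∧
      Subgroup.normalizer (F : Set (Equiv.Perm (GenDihedral p))) ≤ Hol (GenDihedral p) := by
  refine ⟨(rho p).range, ?_, ?_, ?_, ?_⟩
  · -- F ≤ Hol
    apply le_normalizer_of_conj
    rintro s ⟨w, rfl⟩ g ⟨v, rfl⟩
    exact rho_conj_mem p w v
  · -- isomorphism type
    have hcop : Nat.Coprime 2 p := Nat.coprime_two_left.mpr hodd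
    have e3 : ZMod 2 × ZMod p ≃+ ZMod (2 * p) := (ZMod.chineseRemainder hcop).symm.toAddEquiv
    have eadd : ((ZMod p × ZMod p) × ZMod 2) ≃+ (ZMod p × ZMod (2 * p)) :=
      (AddEquiv.prodAssoc).trans
        ((AddEquiv.refl (ZMod p)).prodCongr (AddEquiv.prodComm.trans e3))
    exact ⟨(MonoidHom.ofInjective (rho_inj p)).symm.trans (AddEquiv.toMultiplicative eadd)⟩
  · -- regularity
    constructor
    · intro x y
      refine ⟨rho p ((eW p x)⁻¹ * eW p y), ⟨_, rfl⟩, ?_⟩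
      ext : 1
      · show x.left * ofAdd (toAdd ((eW p x)⁻¹ * eW p y)).1 = y.left
        simp only [eW, Equiv.coe_fn_mk, toAdd_mul, toAdd_inv, toAdd_ofAdd, Prod.fst_add,
          Prod.fst_neg]
        conv_lhs => rw [← ofAdd_toAdd x.left, ← ofAdd_add]
        simp
      · show x.right * ofAdd (toAdd ((eW p x)⁻¹ * eW p y)).2 = y.right
        simp only [eW, Equiv.coe_fn_mk, toAdd_mul, toAdd_inv, toAdd_ofAdd, Prod.snd_add,
          Prod.snd_neg]
        conv_lhs => rw [← ofAdd_toAdd x.right, ← ofAdd_add]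
        simp
        have hsq : ∀ a : Multiplicative (ZMod 2), a * a = 1 := by decide
        rw [← mul_assoc, hsq, one_mul]
    · rintro s ⟨w, rfl⟩ x hx
      have hl := congrArg SemidirectProduct.left hx
      have hr := congrArg SemidirectProduct.right hx
      simp only [rho_apply, mul_eq_left, ofAdd_eq_one] at hl hr
      have hw : w = 1 := by
        apply Multiplicative.toAdd.injective
        exact Prod.ext hl hr
      rw [hw, map_one]
  · -- normalizer of F is contained in Hol
    apply le_normalizer_of_conj
    intro π hπ g hg
    obtain ⟨v, rfl⟩ := hg
    set π' : Equiv.Perm (GenDihedral p) := (rho p (eW p (π 1)))⁻¹ * π with hπ'def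
    have hdecomp : π = rho p (eW p (π 1)) * π' := by rw [hπ'def]; group
    have hπ'mem : π' ∈ Subgroup.normalizer ((rho p).range : Set (Equiv.Perm (GenDihedral p))) :=
      mul_mem (inv_mem (Subgroup.le_normalizer ⟨_, rfl⟩)) hπ
    have hπ'1 : π' 1 = 1 := by
      have h1 : rho p (eW p (π 1)) 1 = π 1 := by
        rw [rho_one_apply]; exact (eW p).symm_apply_apply _
      show ((rho p (eW p (π 1)))⁻¹ * π) 1 = 1
      rw [Equiv.Perm.mul_apply, Equiv.Perm.inv_def, Equiv.symm_apply_eq]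
      exact h1.symm
    have hπ'inv1 : π'⁻¹ 1 = 1 := by
      conv_lhs => rw [← hπ'1]
      exact Equiv.symm_apply_apply π' 1
    set α : WW p → WW p := fun w => eW p (π' ((eW p).symm w)) with hαdef
    have halpha : ∀ w, π' * rho p w * π'⁻¹ = rho p (α w) := by
      intro w
      obtain ⟨u, hu⟩ := (Subgroup.mem_normalizer_iff.mp hπ'mem (rho p w)).mp ⟨w, rfl⟩
      have h1 : (eW p).symm u = π' ((eW p).symm w) := by
        have h2 := congrArg (fun s : Equiv.Perm (GenDihedral p) => s 1) hu
        simp only [Equiv.Perm.mul_apply, rho_one_apply, hπ'inv1] at h2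
        exact h2
      have hu2 : u = α w := by
        rw [hαdef]
        apply (eW p).symm.injective
        rw [h1]
        simp
      rw [← hu2]
      exact hu.symm
    have hαmul : ∀ w₁ w₂, α (w₁ * w₂) = α w₁ * α w₂ := by
      intro w₁ w₂
      apply rho_inj p
      rw [map_mul, ← halpha, ← halpha, ← halpha, map_mul]
      group
    have hαone : α 1 = 1 := by
      have h := hαmul 1 1
      rw [mul_one] at h
      exact mul_eq_left.mp h.symm
    have hαinj : Function.Injective α := fun a b h =>
      (eW p).symm.injective (π'.injective ((eW p).injective h))
    have hαpow : ∀ (n : ℕ) (w : WW p), α (w ^ n) = α w ^ n := by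
      intro n w
      induction n with
      | zero => simpa using hαone
      | succ n ih => rw [pow_succ, pow_succ, hαmul, ih]
    haveI : Fact p.Prime := ⟨hp⟩
    have h2ne : (2 : ZMod p) ≠ 0 := by
      intro h
      have hdvd : p ∣ 2 := (ZMod.natCast_eq_zero_iff 2 p).mp (by exact_mod_cast h)
      have hp2 : p = 2 := (Nat.prime_dvd_prime_iff_eq hp Nat.prime_two).mp hdvd
      rw [hp2] at hodd
      exact (by decide : ¬ Odd 2) hodd
    have htwo : ∀ c : ZMod p, c + c = 0 → c = 0 := by
      intro c hc
      have h2 : (2 : ZMod p) * c = 0 := by rw [two_mul]; exact hc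
      rcases mul_eq_zero.mp h2 with h | h
      · exact absurd h h2ne
      · exact h
    have hpk : ∀ k : ZMod 2, p • k = k := by
      intro k
      obtain ⟨m, hm⟩ := hodd
      have hk2 : ∀ x : ZMod 2, (2 : ℕ) • x = 0 := by
        intro x
        rw [two_nsmul]
        exact (by decide : ∀ x : ZMod 2, x + x = 0) x
      have h2 : (2 * m) • k = 0 := by
        rw [mul_comm, mul_nsmul, hk2]
      rw [hm, add_nsmul, h2, zero_add, one_nsmul]
    have hsnd : ∀ a : ZMod p × ZMod p, (toAdd (α (ofAdd (a, 0)))).2 = 0 := by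
      intro a
      have hwp : (ofAdd (a, (0 : ZMod 2)) : WW p) ^ p = 1 := by
        apply Multiplicative.toAdd.injective
        rw [toAdd_pow]
        show p • (a, (0 : ZMod 2)) = toAdd (1 : WW p)
        have hpa : p • a = 0 := by
          ext <;> simp [nsmul_eq_mul, ZMod.natCast_self]
        rw [Prod.smul_mk, hpa, smul_zero]
        rfl
      have hαp : α (ofAdd (a, (0 : ZMod 2))) ^ p = 1 := by
        rw [← hαpow, hwp, hαone]
      have h0 : p • toAdd (α (ofAdd (a, (0 : ZMod 2)))) = 0 := by
        have := congrArg Multiplicative.toAdd hαp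
        rwa [toAdd_pow] at this
      have hsnd' := congrArg Prod.snd h0
      rw [Prod.smul_snd] at hsnd'
      rw [← hpk (toAdd (α (ofAdd (a, (0:ZMod 2))))).2]
      exact hsnd'
    -- the unique involution is fixed
    have ht : α (ofAdd ((0 : ZMod p × ZMod p), (1 : ZMod 2))) =
        ofAdd ((0 : ZMod p × ZMod p), (1 : ZMod 2)) := by
      set t : WW p := ofAdd ((0 : ZMod p × ZMod p), (1 : ZMod 2)) with htdef
      have ht2 : t ^ 2 = 1 := by
        apply Multiplicative.toAdd.injective
        rw [toAdd_pow, htdef, toAdd_ofAdd, Prod.smul_mk, smul_zero]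
        have h21 : (2 : ℕ) • (1 : ZMod 2) = 0 := by rw [two_nsmul]; decide
        rw [h21]
        rfl
      have htne : t ≠ 1 := by
        intro h
        have := congrArg Multiplicative.toAdd h
        simp only [htdef, toAdd_ofAdd] at this
        have := congrArg Prod.snd this
        exact (by decide : ¬ ((1 : ZMod 2) = (0 : ZMod 2))) (by simpa using this)
      have hαt2 : α t ^ 2 = 1 := by rw [← hαpow, ht2, hαone]
      have h0 : toAdd (α t) + toAdd (α t) = 0 := by
        have := congrArg Multiplicative.toAdd hαt2
        rwa [toAdd_pow, two_nsmul] at this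
      have hfst : (toAdd (α t)).1 = 0 := by
        have h1 := congrArg Prod.fst h0
        rw [Prod.fst_add] at h1
        ext
        · exact htwo _ (by exact congrArg Prod.fst h1)
        · exact htwo _ (by exact congrArg Prod.snd h1)
      have hsnd1 : (toAdd (α t)).2 = 1 := by
        rcases (show ∀ k : ZMod 2, k = 0 ∨ k = 1 by decide) (toAdd (α t)).2 with h | h
        · exfalso
          apply htne
          apply hαinj
          rw [hαone]
          apply Multiplicative.toAdd.injective
          show toAdd (α t) = ((0 : ZMod p × ZMod p), (0 : ZMod 2))
          exact Prod.ext hfst h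
        · exact h
      apply Multiplicative.toAdd.injective
      exact Prod.ext hfst hsnd1
    -- the additive map M
    have hMadd : ∀ a b : ZMod p × ZMod p,
        (toAdd (α (ofAdd (a + b, 0)))).1 =
          (toAdd (α (ofAdd (a, 0)))).1 + (toAdd (α (ofAdd (b, 0)))).1 := by
      intro a b
      have h1 : (ofAdd ((a + b : ZMod p × ZMod p), (0 : ZMod 2)) : WW p) =
          ofAdd (a, 0) * ofAdd (b, 0) := by
        rw [← ofAdd_add]
        congr 1
      rw [h1, hαmul, toAdd_mul, Prod.fst_add]
    set M : (ZMod p × ZMod p) →+ (ZMod p × ZMod p) :=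
      AddMonoidHom.mk' (fun a => (toAdd (α (ofAdd (a, 0)))).1) hMadd with hMdef
    have hform0 : ∀ a : ZMod p × ZMod p, α (ofAdd (a, 0)) = ofAdd (M a, 0) := by
      intro a
      apply Multiplicative.toAdd.injective
      rw [toAdd_ofAdd]
      exact Prod.ext rfl (hsnd a)
    have hformfull : ∀ (a : ZMod p × ZMod p) (k : ZMod 2),
        α (ofAdd (a, k)) = ofAdd (M a, k) := by
      intro a k
      rcases (show ∀ k : ZMod 2, k = 0 ∨ k = 1 by decide) k with h | h
      · rw [h]; exact hform0 a
      · rw [h]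
        have h1 : (ofAdd ((a : ZMod p × ZMod p), (1 : ZMod 2)) : WW p) =
            ofAdd (a, 0) * ofAdd ((0 : ZMod p × ZMod p), (1 : ZMod 2)) := by
          rw [← ofAdd_add]
          congr 1
          simp
        rw [h1, hαmul, hform0, ht, ← ofAdd_add]
        congr 1
        simp
    have hπ'form : ∀ x : GenDihedral p, π' x = ⟨ofAdd (M (toAdd x.left)), x.right⟩ := by
      intro x
      have h1 : π' x = (eW p).symm (α (eW p x)) := by
        rw [hαdef]
        simp
      rw [h1]
      show (eW p).symm (α (ofAdd (toAdd x.left, toAdd x.right))) = _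
      rw [hformfull]
      show (⟨ofAdd (M (toAdd x.left), toAdd x.right).1,
        ofAdd (M (toAdd x.left), toAdd x.right).2⟩ : GenDihedral p) = _
      ext <;> simp
    have hconj := linear_conj p M π' hπ'form v
    rw [hdecomp]
    have hre : rho p (eW p (π 1)) * π' * lam p v * (rho p (eW p (π 1)) * π')⁻¹ =
        rho p (eW p (π 1)) * (π' * lam p v * π'⁻¹) * (rho p (eW p (π 1)))⁻¹ := by
      group
    rw [hre, hconj]
    exact rho_conj_mem p _ _
end

section
/- Let p be an odd prime, and let W = ZMod p × DihedralGroup p (a group of order 2p^2). The holomorph Hol(W) contains a subgroup that is isomorphic to ZMod p × ZMod (2p) and acts regularly on W. -/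
namespace HolAux

open DihedralGroup Multiplicative

variable {n : ℕ}

def psiFun (ε : ZMod 2) (j : ZMod n) : DihedralGroup n → DihedralGroup n :=
  fun x =>
    if ε = 0 then
      match x with
      | .r i => .r (i + j)
      | .sr i => .sr (i + j)
    else
      match x with
      | .r i => .sr (i + j)
      | .sr i => .r (i + j)

lemma zmod2_cases : ∀ y : ZMod 2, y = 0 ∨ y = 1 := by decide

lemma psiFun_comp (ε₁ ε₂ : ZMod 2) (j₁ j₂ : ZMod n) (x : DihedralGroup n) :
    psiFun ε₁ j₁ (psiFun ε₂ j₂ x) = psiFun (ε₁ + ε₂) (j₁ + j₂) x := by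
  rcases zmod2_cases ε₁ with h1 | h1 <;> rcases zmod2_cases ε₂ with h2 | h2 <;>
    subst h1 <;> subst h2 <;> cases x <;>
    simp [psiFun, (show ((1:ZMod 2)) ≠ 0 by decide), (show ((1:ZMod 2))+1 = 0 by decide)] <;> ring

lemma psiFun_zero (x : DihedralGroup n) : psiFun 0 0 x = x := by
  cases x <;> simp [psiFun]


lemma zmod2_add_self (ε : ZMod 2) : ε + ε = 0 := by
  rcases zmod2_cases ε with h | h <;> subst h <;> decide

/-- `psi ε j` as a permutation of the dihedral group. -/
def psi (ε : ZMod 2) (j : ZMod n) : Equiv.Perm (DihedralGroup n) where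
  toFun := psiFun ε j
  invFun := psiFun ε (-j)
  left_inv x := by rw [psiFun_comp, zmod2_add_self, neg_add_cancel, psiFun_zero]
  right_inv x := by rw [psiFun_comp, zmod2_add_self, add_neg_cancel, psiFun_zero]

@[simp] lemma psi_apply (ε : ZMod 2) (j : ZMod n) (x : DihedralGroup n) :
    psi ε j x = psiFun ε j x := rfl

variable (p : ℕ)

/-- The big group `W`. -/
abbrev W := Multiplicative (ZMod p) × DihedralGroup p

/-- The basic permutations of `W`. -/
def phiFun (g : ZMod p × ZMod 2 × ZMod p) : Equiv.Perm (W p) :=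
  Equiv.prodCongr (Equiv.mulLeft (Multiplicative.ofAdd g.1)) (psi g.2.1 g.2.2)

@[simp] lemma phiFun_apply (g : ZMod p × ZMod 2 × ZMod p) (x : W p) :
    phiFun p g x = (Multiplicative.ofAdd g.1 * x.1, psiFun g.2.1 g.2.2 x.2) := rfl

lemma phiFun_mul (g h : ZMod p × ZMod 2 × ZMod p) :
    phiFun p g * phiFun p h = phiFun p (g + h) := by
  ext x
  · simp [Equiv.Perm.mul_apply, ofAdd_add, mul_assoc]
  · simp [Equiv.Perm.mul_apply, psiFun_comp]

lemma phiFun_zero : phiFun p 0 = 1 := by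
  ext x
  · simp
  · simp [psiFun_zero]

lemma phiFun_inv (g : ZMod p × ZMod 2 × ZMod p) : (phiFun p g)⁻¹ = phiFun p (-g) := by
  exact inv_eq_of_mul_eq_one_right (by rw [phiFun_mul, add_neg_cancel, phiFun_zero])

/-- The map giving the regular subgroup, as a monoid hom. -/
def Phi : Multiplicative (ZMod p × ZMod 2 × ZMod p) →* Equiv.Perm (W p) where
  toFun g := phiFun p g.toAdd
  map_one' := phiFun_zero p
  map_mul' g h := by
    show phiFun p (g.toAdd + h.toAdd) = _
    rw [← phiFun_mul]


/-- Effect of conjugation by `phiFun` on left translations. -/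
def tauFun (ε : ZMod 2) : DihedralGroup n → DihedralGroup n :=
  fun d =>
    if ε = 0 then d
    else
      match d with
      | .r m => .r (-m)
      | .sr m => .sr (-m)

lemma key (g : ZMod p × ZMod 2 × ZMod p) (w : W p) :
    phiFun p g * MulAction.toPermHom (W p) (W p) w * (phiFun p g)⁻¹ =
      MulAction.toPermHom (W p) (W p) (w.1, tauFun g.2.1 w.2) := by
  obtain ⟨a, ε, j⟩ := g
  obtain ⟨w1, w2⟩ := w
  rw [phiFun_inv]
  ext x
  · obtain ⟨b, d⟩ := x
    simp [Equiv.Perm.mul_apply, MulAction.toPermHom_apply, smul_eq_mul, Prod.mk_mul_mk,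
      ofAdd_neg, mul_assoc, mul_left_comm, mul_comm]
  · obtain ⟨b, d⟩ := x
    simp only [Equiv.Perm.mul_apply, MulAction.toPermHom_apply, smul_eq_mul, phiFun_apply,
      Prod.mk_mul_mk]
    rcases zmod2_cases ε with h | h <;> subst h <;> cases w2 <;> cases d <;>
      simp [psiFun, tauFun, (show ((1:ZMod 2)) ≠ 0 by decide)] <;> ring

lemma phiFun_mem_hol (g : ZMod p × ZMod 2 × ZMod p) : phiFun p g ∈ Hol (W p) := by
  rw [Hol, Subgroup.mem_normalizer_iff]
  intro q
  constructor
  · rintro ⟨w, rfl⟩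
    exact ⟨(w.1, tauFun g.2.1 w.2), (key p g w).symm⟩
  · rintro ⟨w, hw⟩
    refine ⟨(w.1, tauFun (-g).2.1 w.2), ?_⟩
    rw [← key p (-g) w, ← phiFun_inv]
    rw [hw]
    group


lemma eq_zero_of_fix (g : ZMod p × ZMod 2 × ZMod p) (x : W p) (h : phiFun p g x = x) :
    g = 0 := by
  obtain ⟨a, ε, j⟩ := g
  obtain ⟨b, d⟩ := x
  rw [phiFun_apply, Prod.mk.injEq] at h
  obtain ⟨h1, h2⟩ := h
  have ha : a = 0 := by
    have := mul_eq_right.mp h1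
    simpa using this
  have hej : ε = 0 ∧ j = 0 := by
    rcases zmod2_cases ε with hε | hε <;> subst hε <;> cases d <;>
      simp [psiFun, (show ((1:ZMod 2)) ≠ 0 by decide)] at h2 <;>
      simp [h2]
  exact by simp [Prod.ext_iff, ha, hej.1, hej.2]

lemma exists_psi (d d' : DihedralGroup p) : ∃ ε j, psiFun ε j d = d' := by
  have h1 : ((1:ZMod 2)) ≠ 0 := by decide
  rcases d with i | i <;> rcases d' with i' | i'
  · exact ⟨0, i' - i, by simp [psiFun]⟩
  · exact ⟨1, i' - i, by simp [psiFun, h1]⟩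
  · exact ⟨1, i' - i, by simp [psiFun, h1]⟩
  · exact ⟨0, i' - i, by simp [psiFun]⟩

end HolAux

/-- For `p` an odd prime, the holomorph of `W = ZMod p × DihedralGroup p` contains a
subgroup isomorphic to `ZMod p × ZMod (2p)` acting regularly on `W`. -/
theorem abelian_regular_in_hol_cyclic_prod_dihedral (p : ℕ) (hp : p.Prime) (hodd : Odd p) :
    ∃ S : Subgroup (Equiv.Perm (Multiplicative (ZMod p) × DihedralGroup p)),
      S ≤ Hol (Multiplicative (ZMod p) × DihedralGroup p) ∧
      Nonempty (↥S ≃* Multiplicative (ZMod p × ZMod (2 * p))) ∧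
      IsRegularSubgroup S := by

  classical
  have hco : Nat.Coprime 2 p := Nat.coprime_two_left.mpr hodd
  let e : Multiplicative (ZMod p × ZMod (2*p)) ≃* Multiplicative (ZMod p × (ZMod 2 × ZMod p)) :=
    AddEquiv.toMultiplicative
      ((AddEquiv.refl (ZMod p)).prodCongr (ZMod.chineseRemainder hco).toAddEquiv)
  let Φ' : Multiplicative (ZMod p × ZMod (2*p)) →* Equiv.Perm (HolAux.W p) :=
    (HolAux.Phi p).comp e.toMonoidHom
  have hΦ' : ∀ g, Φ' g = HolAux.phiFun p (Multiplicative.toAdd (e g)) := fun g => rfl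
  have hinj : Function.Injective Φ' := by
    rw [injective_iff_map_eq_one]
    intro a ha
    have hx : HolAux.phiFun p (Multiplicative.toAdd (e a)) (1, DihedralGroup.r 0)
        = (1, DihedralGroup.r 0) := by
      rw [← hΦ' a, ha]; rfl
    have h0 : Multiplicative.toAdd (e a) = 0 := HolAux.eq_zero_of_fix p _ _ hx
    have he1 : e a = 1 := toAdd_eq_zero.mp h0
    exact e.injective (by rw [he1, map_one])
  refine ⟨Φ'.range, ?_, ⟨(MonoidHom.ofInjective hinj).symm⟩, ?_, ?_⟩
  · rintro q ⟨g, rfl⟩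
    rw [hΦ']
    exact HolAux.phiFun_mem_hol p _
  · rintro ⟨b, d⟩ ⟨b', d'⟩
    obtain ⟨ε, j, hj⟩ := HolAux.exists_psi p d d'
    refine ⟨Φ' (e.symm (Multiplicative.ofAdd
      (Multiplicative.toAdd b' - Multiplicative.toAdd b, ε, j))), ⟨_, rfl⟩, ?_⟩
    rw [hΦ', MulEquiv.apply_symm_apply]
    simp [hj]
  · rintro s ⟨g, rfl⟩ x hx
    rw [hΦ'] at hx
    have h0 : Multiplicative.toAdd (e g) = 0 := HolAux.eq_zero_of_fix p _ _ hx
    have he1 : e g = 1 := toAdd_eq_zero.mp h0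
    show (HolAux.Phi p) (e g) = 1
    rw [he1, map_one]
end
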